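/- (Simon's lemma) Let n ≥ 1 be an integer, α ∈ ℝ, and C₀ > 0. Let S be a function from the class of open balls B ⊂ ℝⁿ to [0, +∞] which is subadditive, in the sense that whenever a ball B is covered by finitely many balls B₁, …, B_N one has S(B) ≤ Σ_{j=1}^N S(B_j), and assume S(B₁(0)) < ∞. Then there exists δ > 0, depending only on n and α, such that: if r^α S(B_{r/4}(z)) ≤ δ r^α S(B_r(z)) + C₀ for every ball B_r(z) ⊂ B₁(0), then S(B_{1/2}(0)) ≤ C C₀, where C is a constant depending only on n and α. -/

import Mathlib

open MeasureTheory Set Filter Topology Metric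

/-- Simon's lemma: let `S` be a subadditive `[0,+∞]`-valued function on open
balls of `ℝⁿ` (here parametrized by center and radius) with `S(B₁(0)) < ∞`. There exists
`δ = δ(n,α) > 0` such that if `r^α S(B_{r/4}(z)) ≤ δ r^α S(B_r(z)) + C₀` whenever
`B_r(z) ⊆ B₁(0)`, then `S(B_{1/2}(0)) ≤ C C₀` with `C = C(n,α)`. -/
theorem stmt10 (n : ℕ) (hn : 1 ≤ n) (α : ℝ) :
    ∃ δ : ℝ, 0 < δ ∧ ∃ C : ℝ, 0 < C ∧
      ∀ (S : EuclideanSpace ℝ (Fin n) → ℝ → ENNReal) (C₀ : ℝ), 0 < C₀ →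
        (∀ (z : EuclideanSpace ℝ (Fin n)) (r : ℝ) (N : ℕ)
            (c : Fin N → EuclideanSpace ℝ (Fin n)) (ρ : Fin N → ℝ),
            ball z r ⊆ ⋃ j, ball (c j) (ρ j) → S z r ≤ ∑ j, S (c j) (ρ j)) →
        S 0 1 < ⊤ →
        (∀ (z : EuclideanSpace ℝ (Fin n)) (r : ℝ), 0 < r → ball z r ⊆ ball 0 1 →
            ENNReal.ofReal (r ^ α) * S z (r / 4) ≤
              ENNReal.ofReal (δ * r ^ α) * S z r + ENNReal.ofReal C₀) →
        S 0 (1/2) ≤ ENNReal.ofReal (C * C₀) := by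
  classical
  -- a universal covering family
  obtain ⟨N, p, hp1, hpcov⟩ : ∃ (N : ℕ) (p : Fin N → EuclideanSpace ℝ (Fin n)),
      (∀ j, ‖p j‖ ≤ 1) ∧ closedBall (0 : EuclideanSpace ℝ (Fin n)) 1 ⊆ ⋃ j, ball (p j) (1/8) := by
    have hc : IsCompact (closedBall (0 : EuclideanSpace ℝ (Fin n)) 1) := isCompact_closedBall _ _
    obtain ⟨t, ht⟩ := hc.elim_finite_subcover
      (fun x : closedBall (0 : EuclideanSpace ℝ (Fin n)) 1 =>
        ball (x : EuclideanSpace ℝ (Fin n)) (1/8))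
      (fun _ => isOpen_ball)
      (fun x hx => Set.mem_iUnion.2 ⟨⟨x, hx⟩, mem_ball_self (by norm_num)⟩)
    refine ⟨t.card, fun j => ((t.equivFin.symm j : _) : _), ?_, ?_⟩
    · intro j
      have := ((t.equivFin.symm j : _) : closedBall (0 : EuclideanSpace ℝ (Fin n)) 1).2
      rwa [mem_closedBall, dist_zero_right] at this
    · intro x hx
      obtain ⟨i, hi, hxi⟩ := Set.mem_iUnion₂.1 (ht hx)
      exact Set.mem_iUnion.2 ⟨t.equivFin ⟨i, hi⟩, by simpa using hxi⟩
  have h2pos : (0:ℝ) < (2:ℝ)^α := Real.rpow_pos_of_pos (by norm_num) α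
  have h2pos' : (0:ℝ) < (2:ℝ)^|α| := Real.rpow_pos_of_pos (by norm_num) _
  have h4pos : (0:ℝ) < (1/4:ℝ)^α := Real.rpow_pos_of_pos (by norm_num) α
  set δ : ℝ := (((2:ℝ)^α) * ((2:ℝ)^|α|) * (4*((N:ℝ)+1)))⁻¹ with hδdef
  have hδpos : 0 < δ := by positivity
  -- two key real inequalities
  have hreal1 : (N:ℝ) * (δ * (2:ℝ)^α) ≤ 1/4 := by
    have h2 : (1:ℝ) ≤ (2:ℝ)^|α| := Real.one_le_rpow (by norm_num) (abs_nonneg α)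
    have key : (N:ℝ) * (δ * (2:ℝ)^α) = ((2:ℝ)^|α|)⁻¹ * ((N:ℝ) * (4*((N:ℝ)+1))⁻¹) := by
      rw [hδdef]; field_simp
    rw [key]
    have hb : ((2:ℝ)^|α|)⁻¹ ≤ 1 := by rw [inv_le_one_iff₀]; right; exact h2
    have hc : (N:ℝ) * (4*((N:ℝ)+1))⁻¹ ≤ 1/4 := by
      rw [mul_inv_le_iff₀ (by positivity)]; nlinarith [Nat.cast_nonneg (α := ℝ) N]
    calc ((2:ℝ)^|α|)⁻¹ * ((N:ℝ) * (4*((N:ℝ)+1))⁻¹) ≤ 1 * (1/4) :=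
          mul_le_mul hb hc (by positivity) (by norm_num)
      _ = 1/4 := by norm_num
  have hreal2 : (N:ℝ) * δ ≤ 1/4 := by
    have h2 : (1:ℝ) ≤ ((2:ℝ)^α) * ((2:ℝ)^|α|) := by
      rw [← Real.rpow_add (by norm_num)]
      exact Real.one_le_rpow (by norm_num) (by linarith [neg_abs_le α])
    rw [hδdef, mul_inv]
    have hb : (((2:ℝ)^α) * ((2:ℝ)^|α|))⁻¹ ≤ 1 := by rw [inv_le_one_iff₀]; right; exact h2
    have hc : (N:ℝ) * (4*((N:ℝ)+1))⁻¹ ≤ 1/4 := by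
      rw [mul_inv_le_iff₀ (by positivity)]; nlinarith [Nat.cast_nonneg (α := ℝ) N]
    calc (N:ℝ) * ((((2:ℝ)^α) * ((2:ℝ)^|α|))⁻¹ * (4*((N:ℝ)+1))⁻¹)
        = (((2:ℝ)^α) * ((2:ℝ)^|α|))⁻¹ * ((N:ℝ) * (4*((N:ℝ)+1))⁻¹) := by ring
      _ ≤ 1 * (1/4) := mul_le_mul hb hc (by positivity) (by norm_num)
      _ = 1/4 := by norm_num
  refine ⟨δ, hδpos, ((N:ℝ)+1) * 2 * (((1/4:ℝ)^α)⁻¹), by positivity, ?_⟩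
  intro S C₀ hC₀ hsub hfin hδhyp
  -- monotonicity
  have hmono : ∀ (z : EuclideanSpace ℝ (Fin n)) (r : ℝ) (c : EuclideanSpace ℝ (Fin n)) (ρ' : ℝ), ball z r ⊆ ball c ρ' → S z r ≤ S c ρ' := by
    intro z r c ρ' h
    have := hsub z r 1 (fun _ => c) (fun _ => ρ')
      (fun x hx => Set.mem_iUnion.2 ⟨0, h hx⟩)
    simpa using this
  set μ : ENNReal := (N : ENNReal) * ENNReal.ofReal (δ * (2:ℝ)^α) with hμdef
  have hμeq : μ = ENNReal.ofReal ((N:ℝ) * (δ * (2:ℝ)^α)) := by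
    rw [hμdef, ENNReal.ofReal_mul (Nat.cast_nonneg N), ENNReal.ofReal_natCast]
  have hμ14 : μ ≤ ENNReal.ofReal (1/4) := by rw [hμeq]; exact ENNReal.ofReal_le_ofReal hreal1
  have hμhalf : 2 * μ ≤ 1 := by
    rw [hμeq, ← ENNReal.ofReal_ofNat 2, ← ENNReal.ofReal_mul (by norm_num),
      ← ENNReal.ofReal_one]
    refine ENNReal.ofReal_le_ofReal ?_
    norm_num
    linarith
  -- the key induction
  have key : ∀ k : ℕ, ∀ (y : EuclideanSpace ℝ (Fin n)) (ρ : ℝ), 0 < ρ → ρ ≤ 1/4 → ‖y‖ + 2*ρ ≤ 1 →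
      ENNReal.ofReal (ρ^α) * S y (ρ/4) ≤ 2 * ENNReal.ofReal C₀
        + μ^k * (ENNReal.ofReal ((ρ/2^k)^α) * S 0 1) := by
    intro k
    induction k with
    | zero =>
      intro y ρ hρ hρ4 hy
      have hball : ball y (ρ/4) ⊆ ball (0 : EuclideanSpace ℝ (Fin n)) 1 := by
        apply ball_subset_ball'
        rw [dist_zero_right]
        linarith
      have h1 : S y (ρ/4) ≤ S 0 1 := hmono _ _ _ _ hball
      calc ENNReal.ofReal (ρ^α) * S y (ρ/4) ≤ ENNReal.ofReal (ρ^α) * S 0 1 :=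
            mul_le_mul_right h1 _
        _ ≤ 2 * ENNReal.ofReal C₀ + μ^0 * (ENNReal.ofReal ((ρ/2^0)^α) * S 0 1) := by
            simp
    | succ k ih =>
      intro y ρ hρ hρ4 hy
      have hysub : ball y ρ ⊆ ball (0 : EuclideanSpace ℝ (Fin n)) 1 := by
        apply ball_subset_ball'
        rw [dist_zero_right]
        linarith
      have h1 := hδhyp y ρ hρ hysub
      -- covering of ball y ρ
      have hcov : ball y ρ ⊆ ⋃ j, ball (y + ρ • p j) (ρ/8) := by
        intro x hx
        have hx' : ρ⁻¹ • (x - y) ∈ closedBall (0 : EuclideanSpace ℝ (Fin n)) 1 := by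
          rw [mem_closedBall, dist_zero_right, norm_smul, norm_inv, Real.norm_eq_abs,
            abs_of_pos hρ]
          rw [mem_ball, dist_eq_norm] at hx
          rw [inv_mul_le_iff₀ hρ, mul_one]
          exact hx.le
        obtain ⟨t, ht⟩ := Set.mem_iUnion.1 (hpcov hx')
        refine Set.mem_iUnion.2 ⟨t, ?_⟩
        rw [mem_ball, dist_eq_norm] at ht ⊢
        have heq : x - (y + ρ • p t) = ρ • (ρ⁻¹ • (x - y) - p t) := by
          rw [smul_sub, smul_smul, mul_inv_cancel₀ hρ.ne', one_smul]
          abel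
        rw [heq, norm_smul, Real.norm_eq_abs, abs_of_pos hρ]
        calc ρ * ‖ρ⁻¹ • (x - y) - p t‖ < ρ * (1/8) := mul_lt_mul_of_pos_left ht hρ
          _ = ρ/8 := by ring
      have h2 := hsub y ρ N (fun j => y + ρ • p j) (fun _ => ρ/8) hcov
      -- per-term estimate
      have hstep : ∀ j : Fin N, ENNReal.ofReal (δ * ρ^α) * S (y + ρ • p j) (ρ/8)
          ≤ ENNReal.ofReal (δ * (2:ℝ)^α) * (2 * ENNReal.ofReal C₀
            + μ^k * (ENNReal.ofReal ((ρ/2/2^k)^α) * S 0 1)) := by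
        intro j
        have hnormj : ‖y + ρ • p j‖ + 2*(ρ/2) ≤ 1 := by
          have : ‖y + ρ • p j‖ ≤ ‖y‖ + ρ := by
            calc ‖y + ρ • p j‖ ≤ ‖y‖ + ‖ρ • p j‖ := norm_add_le _ _
              _ ≤ ‖y‖ + ρ := by
                  rw [norm_smul, Real.norm_eq_abs, abs_of_pos hρ]
                  have := mul_le_mul_of_nonneg_left (hp1 j) hρ.le
                  linarith
          linarith
        have ihj := ih (y + ρ • p j) (ρ/2) (by linarith) (by linarith) hnormj
        have hfac : δ * ρ^α = (δ * (2:ℝ)^α) * (ρ/2)^α := by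
          rw [Real.div_rpow hρ.le (by norm_num : (0:ℝ) ≤ 2)]
          field_simp
        have h8 : ρ/8 = (ρ/2)/4 := by ring
        rw [hfac, ENNReal.ofReal_mul (by positivity), mul_assoc, h8]
        exact mul_le_mul_right ihj _
      -- assemble
      have hρnum : ρ/2/2^k = ρ/2^(k+1) := by rw [pow_succ]; ring
      calc ENNReal.ofReal (ρ^α) * S y (ρ/4)
          ≤ ENNReal.ofReal (δ * ρ^α) * S y ρ + ENNReal.ofReal C₀ := h1
        _ ≤ ENNReal.ofReal (δ * ρ^α) * ∑ j, S (y + ρ • p j) (ρ/8) + ENNReal.ofReal C₀ :=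
            add_le_add (mul_le_mul_right h2 _) le_rfl
        _ = (∑ j : Fin N, ENNReal.ofReal (δ * ρ^α) * S (y + ρ • p j) (ρ/8))
            + ENNReal.ofReal C₀ := by rw [Finset.mul_sum]
        _ ≤ (∑ _j : Fin N, ENNReal.ofReal (δ * (2:ℝ)^α) * (2 * ENNReal.ofReal C₀
              + μ^k * (ENNReal.ofReal ((ρ/2/2^k)^α) * S 0 1))) + ENNReal.ofReal C₀ :=
            add_le_add (Finset.sum_le_sum fun j _ => hstep j) le_rfl
        _ = μ * (2 * ENNReal.ofReal C₀ + μ^k * (ENNReal.ofReal ((ρ/2/2^k)^α) * S 0 1))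
            + ENNReal.ofReal C₀ := by
            rw [Finset.sum_const, Finset.card_univ, Fintype.card_fin, nsmul_eq_mul, hμdef,
              mul_assoc]
        _ = (2 * μ) * ENNReal.ofReal C₀ + ENNReal.ofReal C₀
            + μ^(k+1) * (ENNReal.ofReal ((ρ/2^(k+1))^α) * S 0 1) := by
            rw [hρnum, mul_add, pow_succ]; ring
        _ ≤ 1 * ENNReal.ofReal C₀ + ENNReal.ofReal C₀
            + μ^(k+1) * (ENNReal.ofReal ((ρ/2^(k+1))^α) * S 0 1) := by
            gcongr
        _ = 2 * ENNReal.ofReal C₀ + μ^(k+1) * (ENNReal.ofReal ((ρ/2^(k+1))^α) * S 0 1) := by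
            ring
  -- pass to the limit for the relevant balls
  set β : ENNReal := μ * ENNReal.ofReal ((1/2:ℝ)^α) with hβdef
  have hβeq : β = ENNReal.ofReal ((N:ℝ) * δ) := by
    rw [hβdef, hμeq, ← ENNReal.ofReal_mul (by positivity)]
    congr 1
    have : ((1/2:ℝ))^α = ((2:ℝ)^α)⁻¹ := by
      rw [one_div, Real.inv_rpow (by norm_num : (0:ℝ) ≤ 2)]
    rw [this]
    field_simp
  have hβlt : β < 1 := by
    rw [hβeq]
    apply lt_of_le_of_lt (ENNReal.ofReal_le_ofReal hreal2)
    rw [ENNReal.ofReal_lt_one]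
    norm_num
  have hcne : ENNReal.ofReal ((1/4:ℝ)^α) * S 0 1 ≠ ⊤ :=
    ENNReal.mul_ne_top ENNReal.ofReal_ne_top hfin.ne
  have hfinal : ∀ j : Fin N, ENNReal.ofReal ((1/4:ℝ)^α) * S ((1/2:ℝ) • p j) (1/16)
      ≤ 2 * ENNReal.ofReal C₀ := by
    intro j
    have hadm : ‖(1/2:ℝ) • p j‖ + 2*(1/4:ℝ) ≤ 1 := by
      rw [norm_smul, Real.norm_eq_abs]
      have := hp1 j
      rw [abs_of_pos (by norm_num : (0:ℝ) < 1/2)]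
      nlinarith [norm_nonneg (p j)]
    have hvk : ∀ k : ℕ, ENNReal.ofReal ((1/4:ℝ)^α) * S ((1/2:ℝ) • p j) (1/16)
        ≤ 2 * ENNReal.ofReal C₀ + β^k * (ENNReal.ofReal ((1/4:ℝ)^α) * S 0 1) := by
      intro k
      have hk := key k ((1/2:ℝ) • p j) (1/4) (by norm_num) le_rfl hadm
      have h16 : (1/4:ℝ)/4 = 1/16 := by norm_num
      rw [h16] at hk
      -- rewrite the tail term
      have htail : μ^k * (ENNReal.ofReal (((1/4:ℝ)/2^k)^α) * S 0 1)
          = β^k * (ENNReal.ofReal ((1/4:ℝ)^α) * S 0 1) := by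
        have hr1 : ((1/4:ℝ)/2^k) = (1/4:ℝ) * ((1/2:ℝ)^k) := by
          rw [div_eq_mul_inv, ← inv_pow]
          norm_num
        have hr2 : (((1/2:ℝ))^(k:ℕ))^α = (((1/2:ℝ))^α)^(k:ℕ) := by
          rw [← Real.rpow_natCast (1/2 : ℝ) k, ← Real.rpow_natCast ((1/2:ℝ)^α) k,
            ← Real.rpow_mul (by norm_num), ← Real.rpow_mul (by norm_num), mul_comm]
        rw [hr1, Real.mul_rpow (by norm_num) (by positivity), hr2,
          ENNReal.ofReal_mul (by positivity), ENNReal.ofReal_pow (by positivity), hβdef,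
          mul_pow]
        ring
      rw [htail] at hk
      exact hk
    have h1 : Filter.Tendsto (fun k : ℕ => β^k * (ENNReal.ofReal ((1/4:ℝ)^α) * S 0 1))
        Filter.atTop (nhds 0) := by
      have := ENNReal.Tendsto.mul_const
        (ENNReal.tendsto_pow_atTop_nhds_zero_of_lt_one hβlt) (Or.inr hcne)
      simpa using this
    have h0 : Filter.Tendsto (fun k : ℕ => 2 * ENNReal.ofReal C₀
        + β^k * (ENNReal.ofReal ((1/4:ℝ)^α) * S 0 1))
        Filter.atTop (nhds (2 * ENNReal.ofReal C₀)) := by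
      simpa using (tendsto_const_nhds
        (x := 2 * ENNReal.ofReal C₀) (f := (Filter.atTop : Filter ℕ))).add h1
    exact ge_of_tendsto' h0 hvk
  -- conclude
  have hcov2 : ball (0 : EuclideanSpace ℝ (Fin n)) (1/2) ⊆ ⋃ j, ball ((1/2:ℝ) • p j) (1/16) := by
    intro x hx
    have hx' : (2:ℝ) • x ∈ closedBall (0 : EuclideanSpace ℝ (Fin n)) 1 := by
      rw [mem_closedBall, dist_zero_right, norm_smul, Real.norm_eq_abs]
      rw [mem_ball, dist_zero_right] at hx
      rw [abs_of_pos (by norm_num : (0:ℝ) < 2)]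
      linarith
    obtain ⟨t, ht⟩ := Set.mem_iUnion.1 (hpcov hx')
    refine Set.mem_iUnion.2 ⟨t, ?_⟩
    rw [mem_ball, dist_eq_norm] at ht ⊢
    have heq : x - (1/2:ℝ) • p t = (1/2:ℝ) • ((2:ℝ) • x - p t) := by
      rw [smul_sub, smul_smul]; norm_num
    rw [heq, norm_smul, Real.norm_eq_abs, abs_of_pos (by norm_num : (0:ℝ) < 1/2)]
    linarith
  have h0 := hsub 0 (1/2) N (fun j => (1/2:ℝ) • p j) (fun _ => 1/16) hcov2
  have ha4 : ENNReal.ofReal ((1/4:ℝ)^α) ≠ 0 := by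
    simp only [ne_eq, ENNReal.ofReal_eq_zero, not_le]
    exact h4pos
  have heach : ∀ j : Fin N, S ((1/2:ℝ) • p j) (1/16)
      ≤ ENNReal.ofReal (((1/4:ℝ)^α)⁻¹) * (2 * ENNReal.ofReal C₀) := by
    intro j
    have h := hfinal j
    have hinv : ENNReal.ofReal (((1/4:ℝ)^α)⁻¹) = (ENNReal.ofReal ((1/4:ℝ)^α))⁻¹ :=
      ENNReal.ofReal_inv_of_pos h4pos
    calc S ((1/2:ℝ) • p j) (1/16)
        = (ENNReal.ofReal ((1/4:ℝ)^α))⁻¹ * (ENNReal.ofReal ((1/4:ℝ)^α)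
            * S ((1/2:ℝ) • p j) (1/16)) := by
          rw [← mul_assoc, ENNReal.inv_mul_cancel ha4 ENNReal.ofReal_ne_top, one_mul]
      _ ≤ (ENNReal.ofReal ((1/4:ℝ)^α))⁻¹ * (2 * ENNReal.ofReal C₀) := mul_le_mul_right h _
      _ = ENNReal.ofReal (((1/4:ℝ)^α)⁻¹) * (2 * ENNReal.ofReal C₀) := by rw [hinv]
  calc S 0 (1/2) ≤ ∑ j, S ((1/2:ℝ) • p j) (1/16) := h0
    _ ≤ ∑ _j : Fin N, ENNReal.ofReal (((1/4:ℝ)^α)⁻¹) * (2 * ENNReal.ofReal C₀) :=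
        Finset.sum_le_sum fun j _ => heach j
    _ = (N : ENNReal) * (ENNReal.ofReal (((1/4:ℝ)^α)⁻¹) * (2 * ENNReal.ofReal C₀)) := by
        rw [Finset.sum_const, Finset.card_univ, Fintype.card_fin, nsmul_eq_mul]
    _ = ENNReal.ofReal ((N:ℝ) * (((1/4:ℝ)^α)⁻¹ * (2 * C₀))) := by
        rw [ENNReal.ofReal_mul (Nat.cast_nonneg N), ENNReal.ofReal_natCast,
          ENNReal.ofReal_mul (by positivity), ENNReal.ofReal_mul (by norm_num),
          ENNReal.ofReal_ofNat]
    _ ≤ ENNReal.ofReal (((N:ℝ)+1) * 2 * (((1/4:ℝ)^α)⁻¹) * C₀) := by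
        apply ENNReal.ofReal_le_ofReal
        nlinarith [Nat.cast_nonneg (α := ℝ) N, inv_pos.2 h4pos, hC₀.le]
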